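/- arXiv:1202.4821 — 2 statements merged into one kernel-verified Lean document; each statement's English description precedes it below -/
import Mathlib

section
/- Let P be a finite set of points in the upper half-plane with pairwise distinct x-coordinates, and for x ∈ ℝ let F(x) = max_{p ∈ P} dist((x,0), p). If p(x) denotes a point of P achieving this maximum, then for x < x' with unique farthest points p(x) ≠ p(x'), the x-coordinate of p(x) is strictly greater than the x-coordinate of p(x'). -/
noncomputable def pt (x y : ℝ) : EuclideanSpace ℝ (Fin 2) := WithLp.toLp 2 ![x, y]

lemma dist_pt_sq (a : ℝ) (q : EuclideanSpace ℝ (Fin 2)) :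
    (dist (pt a 0) q) ^ 2 = (a - q 0) ^ 2 + (q 1) ^ 2 := by
  rw [EuclideanSpace.dist_eq, Real.sq_sqrt (by positivity)]
  simp [Fin.sum_univ_two, pt, Real.dist_eq, sq_abs]

/-- For a finite set `P` in the upper half-plane with pairwise distinct
x-coordinates, if `x < x'` and `p` (resp. `p'`) is the unique farthest point of `P`
from `(x,0)` (resp. `(x',0)`), and `p ≠ p'`, then the x-coordinate of `p` is strictly
greater than that of `p'`. -/
theorem farthest_point_x_antitone
    (P : Finset (EuclideanSpace ℝ (Fin 2))) (hPne : P.Nonempty)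
    (hup : ∀ q ∈ P, 0 ≤ q 1)
    (hdist : ∀ q ∈ P, ∀ q' ∈ P, q 0 = q' 0 → q = q')
    (x x' : ℝ) (hxx : x < x')
    (p p' : EuclideanSpace ℝ (Fin 2)) (hp : p ∈ P) (hp' : p' ∈ P)
    (hfar : ∀ q ∈ P, q ≠ p → dist (pt x 0) q < dist (pt x 0) p)
    (hfar' : ∀ q ∈ P, q ≠ p' → dist (pt x' 0) q < dist (pt x' 0) p')
    (hne : p ≠ p') :
    p' 0 < p 0 := by
  have h1 := hfar p' hp' (Ne.symm hne)
  have h2 := hfar' p hp hne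
  have h1' : (dist (pt x 0) p') ^ 2 < (dist (pt x 0) p) ^ 2 := by
    exact pow_lt_pow_left₀ h1 dist_nonneg (by norm_num)
  have h2' : (dist (pt x' 0) p) ^ 2 < (dist (pt x' 0) p') ^ 2 := by
    exact pow_lt_pow_left₀ h2 dist_nonneg (by norm_num)
  rw [dist_pt_sq, dist_pt_sq] at h1' h2'
  nlinarith [h1', h2', hxx]
end

section
/- Let P = {p₁, …, p_n} be points in the upper half-plane with strictly increasing x-coordinates, and let D₁, …, D_k be an optimal covering by axis-centered disks (minimizing ∑ r(D_i)^α, α ≥ 1) with centers in strictly increasing x-order, chosen lexicographically leftmost. Then there exist indices 0 = j₀ < j₁ < ⋯ < j_k = n such that the blocks P_m = {p_{j_{m−1}+1}, …, p_{j_m}} satisfy: replacing each D_m by a smallest axis-centered disk C_m enclosing P_m yields a covering of P with the same total cost ∑ r(C_m)^α = ∑ r(D_m)^α. -/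
noncomputable def axisDisk (c r : ℝ) : Set (EuclideanSpace ℝ (Fin 2)) :=
  Metric.closedBall (pt c 0) r

noncomputable def encRad (S : Set (EuclideanSpace ℝ (Fin 2))) : ℝ :=
  sInf {r : ℝ | 0 ≤ r ∧ ∃ c : ℝ, S ⊆ Metric.closedBall (pt c 0) r}

lemma dist_pt (q : EuclideanSpace ℝ (Fin 2)) (c : ℝ) :
    dist q (pt c 0) = Real.sqrt ((q 0 - c)^2 + (q 1)^2) := by
  rw [EuclideanSpace.dist_eq, Fin.sum_univ_two]
  simp [pt, Real.dist_eq, sq_abs]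

lemma mem_axisDisk_iff {c r : ℝ} (hr : 0 ≤ r) (q : EuclideanSpace ℝ (Fin 2)) :
    q ∈ axisDisk c r ↔ (q 0 - c)^2 + (q 1)^2 ≤ r^2 := by
  rw [axisDisk, Metric.mem_closedBall, dist_pt, Real.sqrt_le_iff]
  constructor
  · exact fun h => h.2
  · exact fun h => ⟨hr, h⟩

/-- Uncrossing: if a (left point) is in the right disk and b (right point) in the left disk,
then a is in the left disk or b is in the right disk. -/
lemma uncross {xa ya xb yb c' c r' r : ℝ} (hab : xa < xb) (hcc : c' < c)
    (ha : (xa - c)^2 + ya^2 ≤ r^2) (hb : (xb - c')^2 + yb^2 ≤ r'^2) :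
    (xa - c')^2 + ya^2 ≤ r'^2 ∨ (xb - c)^2 + yb^2 ≤ r^2 := by
  by_contra h
  push_neg at h
  obtain ⟨h1, h2⟩ := h
  nlinarith

lemma dist_ge_abs (q : EuclideanSpace ℝ (Fin 2)) (c : ℝ) : |q 0 - c| ≤ dist q (pt c 0) := by
  rw [dist_pt, ← Real.sqrt_sq_eq_abs]
  exact Real.sqrt_le_sqrt (by nlinarith [sq_nonneg (q 1)])

lemma encRad_attained (S : Set (EuclideanSpace ℝ (Fin 2))) (hS : S.Nonempty) (hfin : S.Finite) :
    0 ≤ encRad S ∧ ∃ c, S ⊆ Metric.closedBall (pt c 0) (encRad S) := by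
  classical
  set T := hfin.toFinset with hTdef
  have hT : T.Nonempty := by rwa [hTdef, Set.Finite.toFinset_nonempty]
  obtain ⟨q0, hq0⟩ := hS
  have hq0T : q0 ∈ T := by rwa [hTdef, Set.Finite.mem_toFinset]
  set R : ℝ → ℝ := fun c => T.sup' hT (fun q => dist q (pt c 0)) with hRdef
  have hRcont : Continuous R := by
    apply Continuous.finset_sup'_apply hT
    intro q _
    have : (fun c => dist q (pt c 0)) = fun c => Real.sqrt ((q 0 - c)^2 + (q 1)^2) := by
      funext c; exact dist_pt q c
    rw [this]; fun_prop
  have hR0 : ∀ c, 0 ≤ R c := fun c =>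
    le_trans dist_nonneg (Finset.le_sup' (fun q => dist q (pt c 0)) hq0T)
  have hcoer : ∀ c, |c| - |q0 0| ≤ R c := by
    intro c
    have h1 : |q0 0 - c| ≤ R c :=
      le_trans (dist_ge_abs q0 c) (Finset.le_sup' (fun q => dist q (pt c 0)) hq0T)
    have h2 : |c| - |q0 0| ≤ |q0 0 - c| := by
      rw [abs_sub_comm]; exact abs_sub_abs_le_abs_sub c (q0 0)
    linarith
  set M : ℝ := R 0 + |q0 0| with hMdef
  have hM0 : (0:ℝ) ∈ Set.Icc (-M) M := by
    constructor <;> [nlinarith [hR0 0, abs_nonneg (q0 0)]; nlinarith [hR0 0, abs_nonneg (q0 0)]]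
  obtain ⟨c₀, hc₀K, hmin⟩ := isCompact_Icc.exists_isMinOn ⟨0, hM0⟩ hRcont.continuousOn
  have hglobal : ∀ c, R c₀ ≤ R c := by
    intro c
    by_cases hc : c ∈ Set.Icc (-M) M
    · exact hmin hc
    · have hMge : (0:ℝ) ≤ M := hM0.2
      have h1 : M < |c| := by
        simp only [Set.mem_Icc, not_and_or, not_le] at hc
        rcases abs_cases c with ⟨he, _⟩ | ⟨he, _⟩ <;> rcases hc with h | h <;> linarith
      have h2 := hcoer c
      have h3 : R c₀ ≤ R 0 := hmin hM0
      have h4 : M = R 0 + |q0 0| := hMdef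
      linarith
  have hsub : S ⊆ Metric.closedBall (pt c₀ 0) (R c₀) := by
    intro q hq
    exact Finset.le_sup' (fun q => dist q (pt c₀ 0)) (by rwa [hTdef, Set.Finite.mem_toFinset])
  have hmemA : R c₀ ∈ {r : ℝ | 0 ≤ r ∧ ∃ c : ℝ, S ⊆ Metric.closedBall (pt c 0) r} :=
    ⟨hR0 c₀, c₀, hsub⟩
  have hbdd : BddBelow {r : ℝ | 0 ≤ r ∧ ∃ c : ℝ, S ⊆ Metric.closedBall (pt c 0) r} :=
    ⟨0, fun r hr => hr.1⟩
  have hlow : ∀ r ∈ {r : ℝ | 0 ≤ r ∧ ∃ c : ℝ, S ⊆ Metric.closedBall (pt c 0) r}, R c₀ ≤ r := by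
    rintro r ⟨hr0, c, hc⟩
    refine le_trans (hglobal c) (Finset.sup'_le _ _ fun q hq => ?_)
    exact hc (by rwa [hTdef, Set.Finite.mem_toFinset] at hq)
  have henc : encRad S = R c₀ :=
    le_antisymm (csInf_le hbdd hmemA) (le_csInf ⟨_, hmemA⟩ hlow)
  rw [henc]
  exact ⟨hR0 c₀, c₀, hsub⟩

lemma dcl {n : ℕ} (s : Finset (Fin n)) (h : ∀ i j : Fin n, i ≤ j → j ∈ s → i ∈ s) (i : Fin n) :
    i ∈ s ↔ (i : ℕ) < s.card := by
  constructor
  · intro hi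
    have hsub : Finset.Iic i ⊆ s := fun j hj => h j i (Finset.mem_Iic.mp hj) hi
    have := Finset.card_le_card hsub
    rw [Fin.card_Iic] at this
    omega
  · intro hi
    by_contra hns
    have hsub : s ⊆ Finset.Iio i := by
      intro j hj
      rw [Finset.mem_Iio]
      by_contra hji
      exact hns (h i j (le_of_not_gt hji) hj)
    have := Finset.card_le_card hsub
    rw [Fin.card_Iio] at this
    omega

/-- Structural theorem behind the consecutive-partition DP.  Let
`p 0, …, p (n-1)` be upper half-plane points with strictly increasing x-coordinates and
let `D₁, …, D_k` be the lexicographically leftmost optimal covering by axis-centered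
disks, with centers in strictly increasing order.  Then the points can be split into
`k` consecutive blocks by indices `0 = J 0 < J 1 < ⋯ < J k = n` such that replacing
each `D_m` by a smallest axis-centered disk `C_m` enclosing its block yields a
covering of `P` of the same total cost. -/
theorem consecutive_partition_structure (n : ℕ) (hn : 0 < n)
    (p : Fin n → EuclideanSpace ℝ (Fin 2))
    (hup : ∀ i, 0 ≤ p i 1)
    (hx : StrictMono (fun i => p i 0))
    (α : ℝ) (hα : 1 ≤ α)
    (k : ℕ) (D : Fin k → ℝ × ℝ) (hr : ∀ i, 0 ≤ (D i).2)
    (hcenters : StrictMono (fun i => (D i).1))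
    (hcov : ∀ i : Fin n, ∃ m, p i ∈ axisDisk (D m).1 (D m).2)
    (hopt : ∀ (l : ℕ) (E : Fin l → ℝ × ℝ), (∀ j, 0 ≤ (E j).2) →
      (∀ i : Fin n, ∃ j, p i ∈ axisDisk (E j).1 (E j).2) →
      ∑ m, (D m).2 ^ α ≤ ∑ j, (E j).2 ^ α)
    (hleft : ∀ E : Fin k → ℝ × ℝ, (∀ j, 0 ≤ (E j).2) →
      (∀ i : Fin n, ∃ j, p i ∈ axisDisk (E j).1 (E j).2) →
      (∑ j, (E j).2 ^ α = ∑ m, (D m).2 ^ α) →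
      ¬ Pi.Lex (· < ·) (· < ·) (fun j => (E j).1) (fun m => (D m).1)) :
    ∃ J : ℕ → ℕ, J 0 = 0 ∧ J k = n ∧ (∀ m < k, J m < J (m + 1)) ∧
      ∃ C : Fin k → ℝ × ℝ,
        (∀ m : Fin k,
          {q | ∃ i : Fin n, J m ≤ (i : ℕ) ∧ (i : ℕ) < J (m + 1) ∧ q = p i} ⊆
            axisDisk (C m).1 (C m).2 ∧
          (C m).2 = encRad {q | ∃ i : Fin n, J m ≤ (i : ℕ) ∧ (i : ℕ) < J (m + 1) ∧ q = p i}) ∧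
        (∀ i : Fin n, ∃ m, p i ∈ axisDisk (C m).1 (C m).2) ∧
        ∑ m, (C m).2 ^ α = ∑ m, (D m).2 ^ α := by
  classical
  -- every disk has a private point
  have hpriv : ∀ m : Fin k, ∃ i : Fin n, p i ∈ axisDisk (D m).1 (D m).2 ∧
      ∀ m', p i ∈ axisDisk (D m').1 (D m').2 → m' = m := by
    intro m
    by_contra hcon
    push_neg at hcon
    set E : Fin k → ℝ × ℝ := fun j => if j = m then ((D m).1 - 1, (D m).2) else D j with hE
    have hEr : ∀ j, 0 ≤ (E j).2 := by
      intro j; by_cases hj : j = m <;> simp [hE, hj, hr]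
    have hEcov : ∀ i : Fin n, ∃ j, p i ∈ axisDisk (E j).1 (E j).2 := by
      intro i
      obtain ⟨m'', hm''⟩ := hcov i
      by_cases h2 : m'' = m
      · subst h2
        obtain ⟨m', hm', hne⟩ := hcon i hm''
        exact ⟨m', by simpa [hE, hne] using hm'⟩
      · exact ⟨m'', by simpa [hE, h2] using hm''⟩
    have hEsum : ∑ j, (E j).2 ^ α = ∑ m, (D m).2 ^ α := by
      apply Finset.sum_congr rfl; intro j _; by_cases hj : j = m <;> simp [hE, hj]
    refine hleft E hEr hEcov hEsum ⟨m, ?_, ?_⟩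
    · intro j hj
      simp [hE, ne_of_lt hj]
    · simp [hE]
  -- uncrossing for points/disks
  have huncross : ∀ (i j : Fin n) (m' m : Fin k), i < j → m' < m →
      p i ∈ axisDisk (D m).1 (D m).2 → p j ∈ axisDisk (D m').1 (D m').2 →
      p i ∈ axisDisk (D m').1 (D m').2 ∨ p j ∈ axisDisk (D m).1 (D m).2 := by
    intro i j m' m hij hm ha hb
    rw [mem_axisDisk_iff (hr m)] at ha
    rw [mem_axisDisk_iff (hr m')] at hb
    rw [mem_axisDisk_iff (hr m'), mem_axisDisk_iff (hr m)]
    exact uncross (hx hij) (hcenters hm) ha hb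
  -- covering sets
  set S : Fin n → Finset (Fin k) :=
    fun i => Finset.univ.filter (fun m => p i ∈ axisDisk (D m).1 (D m).2) with hS
  have hSne : ∀ i, (S i).Nonempty := by
    intro i; obtain ⟨m, hm⟩ := hcov i; exact ⟨m, by simp [hS, hm]⟩
  have hSmem : ∀ (l : Fin n) (m : Fin k), m ∈ S l ↔ p l ∈ axisDisk (D m).1 (D m).2 := by
    intro l m; simp [hS]
  have hne : ∀ i : Fin n, (Finset.univ.filter (· ≤ i) : Finset (Fin n)).Nonempty :=
    fun i => ⟨i, by simp⟩
  set f : Fin n → Fin k :=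
    fun i => (Finset.univ.filter (· ≤ i)).sup' (hne i) (fun j => (S j).min' (hSne j)) with hf
  have hfm : Monotone f := by
    intro i j hij
    apply Finset.sup'_le
    intro a ha
    exact Finset.le_sup' (f := fun l => (S l).min' (hSne l))
      (by simp only [Finset.mem_filter, Finset.mem_univ, true_and] at *; exact le_trans ha hij)
  have hfmem : ∀ i, p i ∈ axisDisk (D (f i)).1 (D (f i)).2 := by
    intro i
    obtain ⟨j, hjmem, hjeq⟩ := Finset.exists_mem_eq_sup' (hne i) (fun j => (S j).min' (hSne j))
    have hji : j ≤ i := by simpa using hjmem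
    have hfi : f i = (S j).min' (hSne j) := hjeq
    have hile : (S i).min' (hSne i) ≤ f i :=
      Finset.le_sup' (f := fun l => (S l).min' (hSne l)) (by simp)
    rcases eq_or_lt_of_le hile with heq | hlt
    · rw [← heq]; exact (hSmem i _).1 (Finset.min'_mem _ _)
    · have hji' : j < i := by
        rcases lt_or_eq_of_le hji with h | h
        · exact h
        · exfalso; subst h; rw [hfi] at hlt; exact lt_irrefl _ hlt
      have ha : p j ∈ axisDisk (D (f i)).1 (D (f i)).2 := by
        rw [hfi]; exact (hSmem j _).1 (Finset.min'_mem _ _)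
      have hb : p i ∈ axisDisk (D ((S i).min' (hSne i))).1 (D ((S i).min' (hSne i))).2 :=
        (hSmem i _).1 (Finset.min'_mem _ _)
      rcases huncross j i ((S i).min' (hSne i)) (f i) hji' hlt ha hb with h | h
      · exfalso
        have hle2 : (S j).min' (hSne j) ≤ (S i).min' (hSne i) :=
          Finset.min'_le _ _ ((hSmem j _).2 h)
        rw [← hfi] at hle2
        exact absurd hlt (not_lt.mpr hle2)
      · exact h
  have hfsurj : ∀ m : Fin k, ∃ i, f i = m := by
    intro m
    obtain ⟨i, _, hp'⟩ := hpriv m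
    exact ⟨i, hp' _ (hfmem i)⟩
  -- the index sequence
  set J : ℕ → ℕ :=
    fun m => (Finset.univ.filter (fun i : Fin n => (f i : ℕ) < m)).card with hJ
  have hchar : ∀ (m : ℕ) (i : Fin n), (f i : ℕ) < m ↔ (i : ℕ) < J m := by
    intro m i
    have h := dcl (Finset.univ.filter (fun i : Fin n => (f i : ℕ) < m))
      (fun a b hab hb => by
        simp only [Finset.mem_filter, Finset.mem_univ, true_and] at *
        have : (f a : ℕ) ≤ (f b : ℕ) := hfm hab
        omega) i
    simpa [hJ] using h
  have hJ0 : J 0 = 0 := by simp [hJ]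
  have hJk : J k = n := by
    rw [hJ]
    have : (Finset.univ.filter (fun i : Fin n => (f i : ℕ) < k)) = Finset.univ := by
      apply Finset.filter_true_of_mem; intro i _; exact (f i).isLt
    simp [this]
  have hJmono : ∀ m < k, J m < J (m + 1) := by
    intro m hmk
    obtain ⟨i, hi⟩ := hfsurj ⟨m, hmk⟩
    apply Finset.card_lt_card
    rw [Finset.ssubset_iff_of_subset]
    · refine ⟨i, ?_, ?_⟩
      · simp [hi]
      · simp [hi]
    · intro a ha
      simp only [Finset.mem_filter, Finset.mem_univ, true_and] at *
      omega
  -- block characterization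
  have hblock : ∀ (m : Fin k) (i : Fin n),
      (J m ≤ (i : ℕ) ∧ (i : ℕ) < J ((m : ℕ) + 1)) ↔ f i = m := by
    intro m i
    have h1 := hchar m i
    have h2 := hchar ((m : ℕ) + 1) i
    constructor
    · rintro ⟨ha, hb⟩
      have hb' : (f i : ℕ) < (m : ℕ) + 1 := h2.2 hb
      have ha' : ¬ ((f i : ℕ) < (m : ℕ)) := fun hh => absurd (h1.1 hh) (by omega)
      exact Fin.ext (by omega)
    · intro hfi
      constructor
      · by_contra hlt
        push_neg at hlt
        have hfl := h1.2 hlt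
        rw [hfi] at hfl
        omega
      · exact h2.1 (by rw [hfi]; omega)
  -- the blocks and their smallest enclosing disks
  have hA : ∀ m : Fin k,
      0 ≤ encRad {q | ∃ i : Fin n, J m ≤ (i : ℕ) ∧ (i : ℕ) < J ((m : ℕ) + 1) ∧ q = p i} ∧
      ∃ c, {q | ∃ i : Fin n, J m ≤ (i : ℕ) ∧ (i : ℕ) < J ((m : ℕ) + 1) ∧ q = p i} ⊆
        Metric.closedBall (pt c 0) (encRad
          {q | ∃ i : Fin n, J m ≤ (i : ℕ) ∧ (i : ℕ) < J ((m : ℕ) + 1) ∧ q = p i}) := by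
    intro m
    apply encRad_attained
    · obtain ⟨i, hi⟩ := hfsurj m
      obtain ⟨ha, hb⟩ := (hblock m i).2 hi
      exact ⟨p i, i, ha, hb, rfl⟩
    · apply Set.Finite.subset (Set.finite_range p)
      rintro q ⟨i, _, _, rfl⟩
      exact Set.mem_range_self i
  choose h0 c hc using hA
  set C : Fin k → ℝ × ℝ := fun m =>
    (c m, encRad {q | ∃ i : Fin n, J m ≤ (i : ℕ) ∧ (i : ℕ) < J ((m : ℕ) + 1) ∧ q = p i}) with hC
  have hCmem : ∀ (i : Fin n), p i ∈ axisDisk (C (f i)).1 (C (f i)).2 := by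
    intro i
    obtain ⟨ha, hb⟩ := (hblock (f i) i).2 rfl
    exact hc (f i) ⟨i, ha, hb, rfl⟩
  have hCcov : ∀ i : Fin n, ∃ m, p i ∈ axisDisk (C m).1 (C m).2 :=
    fun i => ⟨f i, hCmem i⟩
  have hCle : ∀ m : Fin k, (C m).2 ≤ (D m).2 := by
    intro m
    apply csInf_le ⟨0, fun r hr' => hr'.1⟩
    refine ⟨hr m, (D m).1, ?_⟩
    rintro q ⟨i, ha, hb, rfl⟩
    have hfi : f i = m := (hblock m i).1 ⟨ha, hb⟩
    have := hfmem i
    rw [hfi] at this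
    exact this
  have hsum : ∑ m, (C m).2 ^ α = ∑ m, (D m).2 ^ α := by
    apply le_antisymm
    · apply Finset.sum_le_sum
      intro m _
      exact Real.rpow_le_rpow (h0 m) (hCle m) (by linarith)
    · exact hopt k C (fun m => h0 m) hCcov
  exact ⟨J, hJ0, hJk, hJmono, C, fun m => ⟨hc m, rfl⟩, hCcov, hsum⟩
end
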